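/- Let G be a weighted concurrent game with players Agt = {A_1,…,A_n}, σ_Agt a strategy profile with payoff vector p = payoff(σ_Agt), and v the multidimensional weight function on the deviator game D(G). If ρ is an outcome of the Eve strategy π(σ_Agt) in D(G), then ρ satisfies the resilience objective Re(k,p) if, and only if, for every player A_i, MPSup_{v_{n+i}}(ρ) ≥ −p(A_i). -/

import Mathlib

open Filter

section Defs

variable {Stat Agt Act : Type}

/-- A weighted concurrent game: finite sets of states/players/actions are imposed
via `Fintype` assumptions in the theorems. -/
structure CGame (Stat Agt Act : Type) where
  s0 : Stat
  Tab : Stat → (Agt → Act) → Stat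
  w : Agt → Stat → ℤ

/-- A history: an initial state followed by a finite alternating list of moves and states. -/
abbrev Hist (Stat Agt Act : Type) := Stat × List ((Agt → Act) × Stat)

abbrev Strategy (Stat Agt Act : Type) := Hist Stat Agt Act → Act

abbrev Profile (Stat Agt Act : Type) := Agt → Strategy Stat Agt Act

/-- A play: an infinite alternating sequence of states and moves. -/
structure Play (Stat Agt Act : Type) where
  state : ℕ → Stat
  move : ℕ → Agt → Act

/-- The prefix `ρ_{≤ m}` of a play: the history containing states `0..m` and moves `0..m-1`. -/
def Play.pref (ρ : Play Stat Agt Act) (m : ℕ) : Hist Stat Agt Act :=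
  (ρ.state 0, (List.range m).map fun j => (ρ.move j, ρ.state (j + 1)))

/-- `ρ` respects the transition function of `G` (it is a play of `G`). -/
def IsPlay (G : CGame Stat Agt Act) (ρ : Play Stat Agt Act) : Prop :=
  ∀ j, ρ.state (j + 1) = G.Tab (ρ.state j) (ρ.move j)

/-- The deviators from move `a` to move `a'`. -/
def devMove (a a' : Agt → Act) : Set Agt := {A | a A ≠ a' A}

/-- The deviators of a play with respect to a strategy profile. -/
def devPlay (σ : Profile Stat Agt Act) (ρ : Play Stat Agt Act) : Set Agt :=
  ⋃ i : ℕ, devMove (ρ.move i) fun A => σ A (ρ.pref i)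

/-- The deviators of the prefix `ρ_{≤ i}` with respect to a strategy profile. -/
def devPref (σ : Profile Stat Agt Act) (ρ : Play Stat Agt Act) (i : ℕ) : Set Agt :=
  ⋃ j ∈ Finset.range i, devMove (ρ.move j) fun A => σ A (ρ.pref j)

/-- A play is compatible with the strategy of coalition `C` (move condition). -/
def Compatible (C : Set Agt) (σ : Profile Stat Agt Act) (ρ : Play Stat Agt Act) : Prop :=
  ∀ j, ∀ A ∈ C, ρ.move j A = σ A (ρ.pref j)

/-- `Out_G(s, σ_C)`: plays of `G` starting at `s` compatible with `σ` on coalition `C`. -/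
def OutFrom (G : CGame Stat Agt Act) (s : Stat) (C : Set Agt) (σ : Profile Stat Agt Act) :
    Set (Play Stat Agt Act) :=
  {ρ | ρ.state 0 = s ∧ IsPlay G ρ ∧ Compatible C σ ρ}

open Classical in
/-- The profile `(σ_{-C}, σ'_C)`: agrees with `σ'` on `C` and with `σ` outside `C`. -/
noncomputable def combine (C : Set Agt) (σ σ' : Profile Stat Agt Act) : Profile Stat Agt Act :=
  fun A => if A ∈ C then σ' A else σ A

/-- Mean payoff of player `A` along a play. -/
noncomputable def payoffPlay (G : CGame Stat Agt Act) (A : Agt) (ρ : Play Stat Agt Act) : ℝ :=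
  Filter.liminf
    (fun m => (∑ l ∈ Finset.range (m + 1), (G.w A (ρ.state l) : ℝ)) / (m : ℝ)) Filter.atTop

def histLast (h : Hist Stat Agt Act) : Stat := (h.2.map Prod.snd).getLastD h.1

/-- The history of length `m+1` produced by the strategy profile `σ` from `s0`. -/
def outHist (G : CGame Stat Agt Act) (σ : Profile Stat Agt Act) : ℕ → Hist Stat Agt Act
  | 0 => (G.s0, [])
  | m + 1 =>
    let h := outHist G σ m
    (h.1, h.2 ++ [(fun A => σ A h, G.Tab (histLast h) fun A => σ A h)])

/-- The unique outcome of a full strategy profile from `s0`. -/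
def outcomePlay (G : CGame Stat Agt Act) (σ : Profile Stat Agt Act) : Play Stat Agt Act :=
  ⟨fun m => histLast (outHist G σ m), fun m A => σ A (outHist G σ m)⟩

/-- The payoff vector of a strategy profile. -/
noncomputable def payoffProfile (G : CGame Stat Agt Act) (σ : Profile Stat Agt Act) (A : Agt) :
    ℝ :=
  payoffPlay G A (outcomePlay G σ)

/-! The deviator game `D(G)`. -/

abbrev DState (Stat Agt : Type) := Stat × Set Agt

abbrev DHist (Stat Agt Act : Type) :=
  DState Stat Agt × List (((Agt → Act) × (Agt → Act)) × DState Stat Agt)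

abbrev EveStrategy (Stat Agt Act : Type) := DHist Stat Agt Act → Agt → Act

/-- A play of the deviator game: states together with Eve's and Adam's moves. -/
structure DPlay (Stat Agt Act : Type) where
  state : ℕ → DState Stat Agt
  eveMove : ℕ → Agt → Act
  adamMove : ℕ → Agt → Act

/-- Transition function of the deviator game. -/
def DTab (G : CGame Stat Agt Act) (q : DState Stat Agt) (a a' : Agt → Act) : DState Stat Agt :=
  (G.Tab q.1 a', q.2 ∪ devMove a a')

def DPlay.pref (ρ : DPlay Stat Agt Act) (m : ℕ) : DHist Stat Agt Act :=
  (ρ.state 0, (List.range m).map fun j => ((ρ.eveMove j, ρ.adamMove j), ρ.state (j + 1)))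

/-- Projection of a history of `D(G)` to a history of `G` (first state component, Adam's move). -/
def projHist (h : DHist Stat Agt Act) : Hist Stat Agt Act :=
  (h.1.1, h.2.map fun x => (x.1.2, x.2.1))

/-- Projection `π` of a play of `D(G)` to a play of `G`. -/
def projPlay (ρ : DPlay Stat Agt Act) : Play Stat Agt Act :=
  ⟨fun i => (ρ.state i).1, ρ.adamMove⟩

/-- The Eve strategy `π(σ_Agt)` associated with a strategy profile. -/
def eveOf (σ : Profile Stat Agt Act) : EveStrategy Stat Agt Act :=
  fun h A => σ A (projHist h)

/-- `δ(ρ)`: the limit of the deviator components along a play of `D(G)`. -/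
def delta (ρ : DPlay Stat Agt Act) : Set Agt := ⋃ i : ℕ, (ρ.state i).2

/-- Play of the deviator game from state `q` where Eve follows `σE` and Adam is unconstrained. -/
def IsDPlayFrom (G : CGame Stat Agt Act) (q : DState Stat Agt) (σE : EveStrategy Stat Agt Act)
    (ρ : DPlay Stat Agt Act) : Prop :=
  ρ.state 0 = q ∧
    ∀ j, ρ.eveMove j = σE (ρ.pref j) ∧
      ρ.state (j + 1) = DTab G (ρ.state j) (ρ.eveMove j) (ρ.adamMove j)

/-- Outcome of an Eve strategy from the initial state `(s0, ∅)` of `D(G)`. -/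
def IsOutcome (G : CGame Stat Agt Act) (σE : EveStrategy Stat Agt Act)
    (ρ : DPlay Stat Agt Act) : Prop :=
  IsDPlayFrom G (G.s0, ∅) σE ρ

/-- An Eve strategy is winning for objective `Ω` if all its outcomes belong to `Ω`. -/
def Winning (G : CGame Stat Agt Act) (σE : EveStrategy Stat Agt Act)
    (Ω : Set (DPlay Stat Agt Act)) : Prop :=
  ∀ ρ, IsOutcome G σE ρ → ρ ∈ Ω

/-- `σ` is `k`-resilient: `C`-resilient for every coalition `C` of size at most `k`. -/
def kResilient (G : CGame Stat Agt Act) (σ : Profile Stat Agt Act) (k : ℕ) : Prop :=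
  ∀ C : Set Agt, C.ncard ≤ k → ∀ σ' : Profile Stat Agt Act, ∀ A ∈ C,
    payoffProfile G (combine C σ σ') A ≤ payoffProfile G σ A

/-- `σ` is `(t,r)`-immune: `(C,r)`-immune for every coalition `C` of size at most `t`. -/
def tImmune (G : CGame Stat Agt Act) (σ : Profile Stat Agt Act) (t : ℕ) (r : ℝ) : Prop :=
  ∀ C : Set Agt, C.ncard ≤ t → ∀ σ' : Profile Stat Agt Act, ∀ A ∉ C,
    payoffProfile G σ A - r ≤ payoffProfile G (combine C σ σ') A

/-- The resilience objective `Re(k,p)`. -/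
def ReObj (G : CGame Stat Agt Act) (k : ℕ) (p : Agt → ℝ) : Set (DPlay Stat Agt Act) :=
  {ρ | k < (delta ρ).ncard} ∪
    {ρ | (delta ρ).ncard = k ∧ ∀ A ∈ delta ρ, payoffPlay G A (projPlay ρ) ≤ p A} ∪
    {ρ | (delta ρ).ncard < k ∧ ∀ A : Agt, payoffPlay G A (projPlay ρ) ≤ p A}

/-- The immunity objective `I(t,r,p)`. -/
def ImmObj (G : CGame Stat Agt Act) (t : ℕ) (r : ℝ) (p : Agt → ℝ) : Set (DPlay Stat Agt Act) :=
  {ρ | t < (delta ρ).ncard} ∪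
    {ρ | ∀ A ∉ delta ρ, p A - r ≤ payoffPlay G A (projPlay ρ)}

/-- Mean payoff (liminf) of a weight function on states of `D(G)` along a play. -/
noncomputable def MP (u : DState Stat Agt → ℤ) (ρ : DPlay Stat Agt Act) : ℝ :=
  Filter.liminf
    (fun m => (∑ l ∈ Finset.range (m + 1), (u (ρ.state l) : ℝ)) / (m : ℝ)) Filter.atTop

/-- Mean payoff (limsup) of a weight function on states of `D(G)` along a play. -/
noncomputable def MPSup (u : DState Stat Agt → ℤ) (ρ : DPlay Stat Agt Act) : ℝ :=
  Filter.limsup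
    (fun m => (∑ l ∈ Finset.range (m + 1), (u (ρ.state l) : ℝ)) / (m : ℝ)) Filter.atTop

end Defs

section Weights

variable {Stat Act : Type} {n : ℕ}

/-- `W`: the maximal absolute value of the weights. -/
noncomputable def Wmax (G : CGame Stat (Fin n) Act) [Fintype Stat] : ℤ :=
  ((Finset.univ : Finset (Fin n × Stat)).sup fun x => (G.w x.1 x.2).natAbs : ℕ)

open Classical in
/-- Dimension `i` (for `i ∈ [1,n]`) of the weight function `v`, used for immunity. -/
noncomputable def vImm (G : CGame Stat (Fin n) Act) [Fintype Stat] (t : ℕ) (i : Fin n)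
    (q : DState Stat (Fin n)) : ℤ :=
  if q.2.ncard ≤ t ∧ i ∉ q.2 then G.w i q.1 else Wmax G

open Classical in
/-- Dimension `n + i` of the weight function `v`, used for resilience. -/
noncomputable def vRes (G : CGame Stat (Fin n) Act) [Fintype Stat] (k : ℕ) (i : Fin n)
    (q : DState Stat (Fin n)) : ℤ :=
  if q.2.ncard < k ∨ (q.2.ncard = k ∧ i ∈ q.2) then -(G.w i q.1) else Wmax G

open Classical in
/-- Dimension `2n + i` of the weight function `v`, constraining the payoff with no deviation. -/
noncomputable def vPay (G : CGame Stat (Fin n) Act) [Fintype Stat] (i : Fin n)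
    (q : DState Stat (Fin n)) : ℤ :=
  if q.2 = ∅ then G.w i q.1 else Wmax G

open Classical in
/-- Dimension `3n + i` of the weight function `v`, constraining the payoff with no deviation. -/
noncomputable def vPayNeg (G : CGame Stat (Fin n) Act) [Fintype Stat] (i : Fin n)
    (q : DState Stat (Fin n)) : ℤ :=
  if q.2 = ∅ then -(G.w i q.1) else Wmax G

end Weights


noncomputable def avgSeq (u : ℕ → ℝ) (m : ℕ) : ℝ :=
  (∑ l ∈ Finset.range (m + 1), u l) / (m : ℝ)

lemma real_le_of_forall_pos_le_add {a b : ℝ} (h : ∀ ε : ℝ, 0 < ε → a ≤ b + ε) : a ≤ b := by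
  by_contra h'
  push_neg at h'
  have := h ((a - b) / 2) (by linarith)
  linarith

lemma avg_abs_le {u : ℕ → ℝ} {B : ℝ} (hu : ∀ l, |u l| ≤ B) :
    ∀ m : ℕ, 1 ≤ m → |avgSeq u m| ≤ 2 * B := by
  intro m hm
  have hm0 : (0 : ℝ) < (m : ℝ) := by exact_mod_cast hm
  have hsum : |∑ l ∈ Finset.range (m + 1), u l| ≤ ((m : ℝ) + 1) * B := by
    calc |∑ l ∈ Finset.range (m + 1), u l| ≤ ∑ l ∈ Finset.range (m + 1), |u l| :=
          Finset.abs_sum_le_sum_abs _ _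
      _ ≤ ∑ _l ∈ Finset.range (m + 1), B := Finset.sum_le_sum fun l _ => hu l
      _ = ((m : ℝ) + 1) * B := by rw [Finset.sum_const, Finset.card_range, nsmul_eq_mul]; push_cast; ring
  have hB : 0 ≤ B := le_trans (abs_nonneg _) (hu 0)
  rw [avgSeq, abs_div, abs_of_pos hm0, div_le_iff₀ hm0]
  have h1 : ((m : ℝ) + 1) ≤ 2 * (m : ℝ) := by
    have : (1 : ℝ) ≤ (m : ℝ) := by exact_mod_cast hm
    linarith
  calc |∑ l ∈ Finset.range (m + 1), u l| ≤ ((m : ℝ) + 1) * B := hsum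
    _ ≤ 2 * (m : ℝ) * B := by nlinarith
    _ = 2 * B * (m : ℝ) := by ring

lemma avg_bddU {u : ℕ → ℝ} {B : ℝ} (hu : ∀ l, |u l| ≤ B) :
    IsBoundedUnder (· ≤ ·) atTop (avgSeq u) :=
  ⟨2 * B, eventually_map.2 <| eventually_atTop.2
    ⟨1, fun m hm => (abs_le.1 (avg_abs_le hu m hm)).2⟩⟩

lemma avg_bddL {u : ℕ → ℝ} {B : ℝ} (hu : ∀ l, |u l| ≤ B) :
    IsBoundedUnder (· ≥ ·) atTop (avgSeq u) :=
  ⟨-(2 * B), eventually_map.2 <| eventually_atTop.2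
    ⟨1, fun m hm => (abs_le.1 (avg_abs_le hu m hm)).1⟩⟩

lemma tendsto_avg_sub {u u' : ℕ → ℝ} {N : ℕ} (h : ∀ l, N ≤ l → u l = u' l) :
    Tendsto (fun m => avgSeq u m - avgSeq u' m) atTop (nhds 0) := by
  set C := ∑ l ∈ Finset.range N, (u l - u' l) with hC
  have key : ∀ m : ℕ, N ≤ m → avgSeq u m - avgSeq u' m = C / m := by
    intro m hm
    have hsub : Finset.range N ⊆ Finset.range (m + 1) := by
      intro x hx; simp only [Finset.mem_range] at hx ⊢; omega
    have : ∑ l ∈ Finset.range (m + 1), (u l - u' l) = C := by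
      refine (Finset.sum_subset hsub ?_).symm
      intro x _ hx'
      have hx : N ≤ x := by simpa using hx'
      rw [h x hx, sub_self]
    rw [avgSeq, avgSeq, div_sub_div_same, Finset.sum_sub_distrib] at *
    rw [this]
  refine (tendsto_const_div_atTop_nhds_zero_nat C).congr' ?_
  filter_upwards [eventually_ge_atTop N] with m hm
  exact (key m hm).symm

lemma limsup_eq_of_tendsto_sub {f g : ℕ → ℝ}
    (hfle : IsBoundedUnder (· ≤ ·) atTop f) (hfge : IsBoundedUnder (· ≥ ·) atTop f)
    (hgle : IsBoundedUnder (· ≤ ·) atTop g) (hgge : IsBoundedUnder (· ≥ ·) atTop g)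
    (h : Tendsto (fun m => f m - g m) atTop (nhds 0)) :
    limsup f atTop = limsup g atTop := by
  have main : ∀ a b : ℕ → ℝ, IsBoundedUnder (· ≥ ·) atTop a →
      IsBoundedUnder (· ≤ ·) atTop b → IsCoboundedUnder (· ≤ ·) atTop b →
      Tendsto (fun m => a m - b m) atTop (nhds 0) →
      limsup a atTop ≤ limsup b atTop := by
    intro a b hage hble hbco hab
    refine real_le_of_forall_pos_le_add fun ε hε => ?_
    have h1 : ∀ᶠ m in atTop, a m ≤ b m + ε := by
      filter_upwards [hab.eventually (eventually_le_nhds hε)] with m hm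
      linarith
    have h2 : IsBoundedUnder (· ≤ ·) atTop (fun m => b m + ε) := by
      obtain ⟨c, hc⟩ := hble
      refine ⟨c + ε, eventually_map.2 ?_⟩
      have hc' : ∀ᶠ m in atTop, b m ≤ c := eventually_map.1 hc
      filter_upwards [hc'] with m hm
      linarith
    calc limsup a atTop ≤ limsup (fun m => b m + ε) atTop :=
          limsup_le_limsup h1 hage.isCoboundedUnder_le h2
      _ = limsup b atTop + ε := limsup_add_const atTop b ε hble hbco
  exact le_antisymm
    (main f g hfge hgle hgge.isCoboundedUnder_le h)
    (main g f hgge hfle hfge.isCoboundedUnder_le (by simpa using h.neg))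

lemma limsup_avg_neg {u : ℕ → ℝ} {B : ℝ} (hu : ∀ l, |u l| ≤ B) :
    limsup (avgSeq (fun l => -(u l))) atTop = -(liminf (avgSeq u) atTop) := by
  have hnegeq : avgSeq (fun l => -(u l)) = fun m => (0 : ℝ) - avgSeq u m := by
    funext m
    simp [avgSeq, Finset.sum_neg_distrib, neg_div]
  rw [hnegeq, limsup_const_sub atTop (avgSeq u) 0
    (avg_bddU hu).isCoboundedUnder_ge (avg_bddL hu)]
  simp

lemma limsup_avg_const (c : ℝ) : limsup (avgSeq (fun _ => c)) atTop = c := by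
  have h0 : Tendsto (fun m : ℕ => c + c / m) atTop (nhds c) := by
    simpa using tendsto_const_nhds.add (tendsto_const_div_atTop_nhds_zero_nat c)
  have h : Tendsto (avgSeq fun _ => c) atTop (nhds c) := by
    refine h0.congr' ?_
    filter_upwards [eventually_ge_atTop 1] with m hm
    have hm0 : (m : ℝ) ≠ 0 := by positivity
    rw [avgSeq, Finset.sum_const, Finset.card_range]
    field_simp
    ring
  exact h.limsup_eq

lemma neg_le_liminf_avg {u : ℕ → ℝ} {B : ℝ} (hu : ∀ l, |u l| ≤ B) :
    -B ≤ liminf (avgSeq u) atTop := by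
  have hB : 0 ≤ B := le_trans (abs_nonneg _) (hu 0)
  refine real_le_of_forall_pos_le_add fun ε hε => ?_
  have key : ∀ᶠ m in atTop, -B - ε ≤ avgSeq u m := by
    filter_upwards [eventually_ge_atTop 1,
      (tendsto_const_div_atTop_nhds_zero_nat B).eventually (eventually_le_nhds hε)]
      with m hm hBm
    have hm0 : (0 : ℝ) < (m : ℝ) := by exact_mod_cast hm
    have hsum : -((m : ℝ) + 1) * B ≤ ∑ l ∈ Finset.range (m + 1), u l := by
      have : -(∑ l ∈ Finset.range (m + 1), u l) ≤ ((m : ℝ) + 1) * B := by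
        calc -(∑ l ∈ Finset.range (m + 1), u l) ≤ |∑ l ∈ Finset.range (m + 1), u l| :=
              neg_le_abs _
          _ ≤ ∑ l ∈ Finset.range (m + 1), |u l| := Finset.abs_sum_le_sum_abs _ _
          _ ≤ ∑ _l ∈ Finset.range (m + 1), B := Finset.sum_le_sum fun l _ => hu l
          _ = ((m : ℝ) + 1) * B := by
              rw [Finset.sum_const, Finset.card_range, nsmul_eq_mul]; push_cast; ring
      linarith
    have : (-((m : ℝ) + 1) * B) / m ≤ avgSeq u m := by
      rw [avgSeq]
      exact div_le_div_of_nonneg_right hsum hm0.le |>.trans_eq rfl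
    have heq : (-((m : ℝ) + 1) * B) / m = -B - B / m := by field_simp; ring
    rw [heq] at this
    linarith
  have := le_liminf_of_le ((avg_bddU hu).isCoboundedUnder_ge) key
  linarith

section MainAux

variable {Stat Act : Type} {n : ℕ} [Fintype Stat]

lemma wmax_nonneg (G : CGame Stat (Fin n) Act) : (0 : ℝ) ≤ ((Wmax G : ℤ) : ℝ) := by
  have : (0 : ℤ) ≤ Wmax G := Int.natCast_nonneg _
  exact_mod_cast this

lemma abs_w_le (G : CGame Stat (Fin n) Act) (A : Fin n) (s : Stat) :
    |((G.w A s : ℤ) : ℝ)| ≤ ((Wmax G : ℤ) : ℝ) := by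
  have h : (G.w A s).natAbs ≤ Finset.univ.sup (fun x : Fin n × Stat => (G.w x.1 x.2).natAbs) :=
    Finset.le_sup (f := fun x : Fin n × Stat => (G.w x.1 x.2).natAbs) (Finset.mem_univ (A, s))
  have h2 : |G.w A s| ≤ Wmax G := by
    rw [Int.abs_eq_natAbs, Wmax]
    exact_mod_cast h
  calc |((G.w A s : ℤ) : ℝ)| = ((|G.w A s| : ℤ) : ℝ) := Int.cast_abs.symm
    _ ≤ ((Wmax G : ℤ) : ℝ) := by exact_mod_cast h2

lemma abs_vRes_le (G : CGame Stat (Fin n) Act) (k : ℕ) (i : Fin n) (q : DState Stat (Fin n)) :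
    |((vRes G k i q : ℤ) : ℝ)| ≤ ((Wmax G : ℤ) : ℝ) := by
  rw [vRes]
  split_ifs
  · rw [Int.cast_neg, abs_neg]
    exact abs_w_le G i q.1
  · rw [abs_of_nonneg (wmax_nonneg G)]

lemma payoff_ge_neg_wmax (G : CGame Stat (Fin n) Act) (A : Fin n) (ρ : Play Stat (Fin n) Act) :
    -((Wmax G : ℤ) : ℝ) ≤ payoffPlay G A ρ :=
  neg_le_liminf_avg (fun l => abs_w_le G A (ρ.state l))

end MainAux

theorem statement8 {Stat Act : Type} {n : ℕ} [Fintype Stat] [Fintype Act]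
    (G : CGame Stat (Fin n) Act) (σ : Profile Stat (Fin n) Act) (k : ℕ)
    (ρ : DPlay Stat (Fin n) Act) (hρ : IsOutcome G (eveOf σ) ρ) :
    ρ ∈ ReObj G k (payoffProfile G σ) ↔
      ∀ i : Fin n, -(payoffProfile G σ i) ≤ MPSup (vRes G k i) ρ := by
  classical
  obtain ⟨h0, hstep⟩ := hρ
  set W : ℝ := ((Wmax G : ℤ) : ℝ) with hWdef
  set p : Fin n → ℝ := payoffProfile G σ with hpdef
  set P : Fin n → ℝ := fun A => payoffPlay G A (projPlay ρ) with hPdef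
  set K : ℕ := (delta ρ).ncard with hKdef
  -- deviator sets are monotone and stabilize
  have hsucc : ∀ j, (ρ.state j).2 ⊆ (ρ.state (j + 1)).2 := by
    intro j
    rw [(hstep j).2]
    exact Set.subset_union_left
  have hmono : Monotone fun j => (ρ.state j).2 :=
    monotone_nat_of_le_succ hsucc
  have hsub : ∀ j, (ρ.state j).2 ⊆ delta ρ := fun j =>
    Set.subset_iUnion (fun i => (ρ.state i).2) j
  obtain ⟨N, hN⟩ : ∃ N, ∀ j, N ≤ j → (ρ.state j).2 = delta ρ := by
    have hch : ∀ A, A ∈ delta ρ → ∃ j, A ∈ (ρ.state j).2 := fun A hA => Set.mem_iUnion.1 hA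
    choose f hf using hch
    set g : Fin n → ℕ := fun A => if h : A ∈ delta ρ then f A h else 0 with hg
    refine ⟨Finset.univ.sup g, fun j hj => Set.Subset.antisymm (hsub j) fun A hA => ?_⟩
    have h1 : g A ≤ j := le_trans (Finset.le_sup (Finset.mem_univ A)) hj
    have h2 : A ∈ (ρ.state (g A)).2 := by
      rw [hg]
      simp only [hA, dif_pos]
      exact hf A hA
    exact hmono h1 h2
  -- bounds on payoffs
  have habsw : ∀ (A : Fin n) (l : ℕ), |((G.w A ((projPlay ρ).state l) : ℤ) : ℝ)| ≤ W :=
    fun A l => abs_w_le G A _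
  have hpW : ∀ i : Fin n, -(p i) ≤ W := by
    intro i
    have := payoff_ge_neg_wmax G i (outcomePlay G σ)
    rw [hpdef]
    unfold payoffProfile
    linarith
  -- value of the limsup in each dimension
  have hval : ∀ i : Fin n,
      MPSup (vRes G k i) ρ = if K < k ∨ (K = k ∧ i ∈ delta ρ) then -(P i) else W := by
    intro i
    have hMP : MPSup (vRes G k i) ρ =
        limsup (avgSeq fun l => ((vRes G k i (ρ.state l) : ℤ) : ℝ)) atTop := rfl
    have hPP : P i = liminf (avgSeq fun l => ((G.w i ((ρ.state l).1) : ℤ) : ℝ)) atTop := rfl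
    have hbv : ∀ l, |((vRes G k i (ρ.state l) : ℤ) : ℝ)| ≤ W := fun l => abs_vRes_le G k i _
    have hbw : ∀ l, |((G.w i ((ρ.state l).1) : ℤ) : ℝ)| ≤ W := fun l => abs_w_le G i _
    by_cases hcond : K < k ∨ (K = k ∧ i ∈ delta ρ)
    · rw [if_pos hcond]
      have heq : ∀ l, N ≤ l → ((vRes G k i (ρ.state l) : ℤ) : ℝ)
          = -(((G.w i ((ρ.state l).1) : ℤ) : ℝ)) := by
        intro l hl
        rw [vRes, hN l hl, ← hKdef, if_pos hcond]
        push_cast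
        ring
      have hbnw : ∀ l, |(-(((G.w i ((ρ.state l).1) : ℤ) : ℝ)))| ≤ W := by
        intro l; rw [abs_neg]; exact hbw l
      rw [hMP, limsup_eq_of_tendsto_sub (avg_bddU hbv) (avg_bddL hbv)
          (avg_bddU hbnw) (avg_bddL hbnw) (tendsto_avg_sub heq),
        limsup_avg_neg hbw, hPP]
    · rw [if_neg hcond]
      have heq : ∀ l, N ≤ l → ((vRes G k i (ρ.state l) : ℤ) : ℝ) = W := by
        intro l hl
        rw [vRes, hN l hl, ← hKdef, if_neg hcond]
      have hbc : ∀ l : ℕ, |(fun _ : ℕ => W) l| ≤ W := by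
        intro l
        rw [abs_of_nonneg (wmax_nonneg G)]
      rw [hMP, limsup_eq_of_tendsto_sub (avg_bddU hbv) (avg_bddL hbv)
          (avg_bddU hbc) (avg_bddL hbc) (tendsto_avg_sub heq), limsup_avg_const]
  -- unfolding the resilience objective
  have hRe : ρ ∈ ReObj G k p ↔
      (k < K ∨ (K = k ∧ ∀ A ∈ delta ρ, P A ≤ p A)) ∨ (K < k ∧ ∀ A : Fin n, P A ≤ p A) := by
    simp only [ReObj, Set.mem_union, Set.mem_setOf_eq, hKdef, hPdef, hpdef]
  rw [hRe]
  -- the right-hand side, rewritten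
  have hRHS : (∀ i : Fin n, -(p i) ≤ MPSup (vRes G k i) ρ) ↔
      (∀ i : Fin n, (K < k ∨ (K = k ∧ i ∈ delta ρ)) → P i ≤ p i) := by
    constructor
    · intro h i hi
      have := h i
      rw [hval i, if_pos hi] at this
      linarith
    · intro h i
      rw [hval i]
      split_ifs with hi
      · have := h i hi
        linarith
      · exact hpW i
  rw [hRHS]
  rcases lt_trichotomy K k with hKk | hKk | hKk
  · constructor
    · rintro ((h | ⟨h, _⟩) | ⟨_, h⟩) i _
      · omega
      · omega
      · exact h i
    · intro h
      exact Or.inr ⟨hKk, fun A => h A (Or.inl hKk)⟩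
  · constructor
    · rintro ((h | ⟨_, h⟩) | ⟨h, _⟩) i hi
      · omega
      · rcases hi with hi | ⟨_, hi⟩
        · omega
        · exact h i hi
      · omega
    · intro h
      exact Or.inl (Or.inr ⟨hKk, fun A hA => h A (Or.inr ⟨hKk, hA⟩)⟩)
  · constructor
    · intro _ i hi
      rcases hi with hi | ⟨hi, _⟩ <;> omega
    · intro _
      exact Or.inl (Or.inl hKk)
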